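/- Duality preserves the binomial theorem: let F be a field of characteristic p > 0, complete with respect to a non-Archimedean norm. Let H be an additive generator with a two-sided composition inverse Hinv which is also an additive generator. Let S ⊆ F and let u : F → (ℕ → F) be a family with u_z(0) = 1 for all z and with u_z a null sequence for every z ∈ S and every z of the form x+y with x,y ∈ S. For such z define v_z(k) := ∑_{m≥0} (coeff_m(Hinv^k))·u_z(m). Then u satisfies the binomial theorem with respect to S — meaning u_{x+y}(n) = ∑_{k=0}^{n} choose(n,k)·u_x(k)·u_y(n-k) for all x,y ∈ S and all n — if and only if v satisfies the binomial theorem with respect to S. -/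

import Mathlib

open Filter

/-- An additive generator: zero constant coefficient, supported on exponents
that are powers of `p`, all coefficients of norm at most `1`, and coefficient
of `T` of norm exactly `1`. -/
def IsAddGen {F : Type*} [NormedField F] (p : ℕ) (H : PowerSeries F) : Prop :=
  PowerSeries.constantCoeff H = 0 ∧
    (∀ n : ℕ, (¬ ∃ m : ℕ, n = p ^ m) → PowerSeries.coeff n H = 0) ∧
    (∀ n : ℕ, ‖PowerSeries.coeff n H‖ ≤ 1) ∧ ‖PowerSeries.coeff 1 H‖ = 1

/-- Composition `P ∘ H` of power series, for `H` with zero constant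
coefficient. -/
noncomputable def psComp {F : Type*} [Field F] (P H : PowerSeries F) : PowerSeries F :=
  PowerSeries.mk fun n => ∑ k ∈ Finset.range (n + 1),
    PowerSeries.coeff k P * PowerSeries.coeff n (H ^ k)


open Filter

section PS

variable {F : Type*} [Field F]

theorem sum_range_antidiagonal {M : Type*} [AddCommMonoid M] (n : ℕ) (f : ℕ × ℕ → M)
    (hf : ∀ p : ℕ × ℕ, n < p.1 + p.2 → f p = 0) :
    ∑ k ∈ Finset.range (n + 1), ∑ p ∈ Finset.HasAntidiagonal.antidiagonal k, f p
      = ∑ p ∈ Finset.range (n + 1) ×ˢ Finset.range (n + 1), f p := by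
  classical
  rw [← Finset.sum_biUnion]
  · apply Finset.sum_subset
    · intro q hq
      simp only [Finset.mem_biUnion, Finset.mem_range] at hq
      obtain ⟨k, hk, hqk⟩ := hq
      rw [Finset.HasAntidiagonal.mem_antidiagonal] at hqk
      simp only [Finset.mem_product, Finset.mem_range]
      omega
    · intro q _ hnq
      apply hf
      by_contra h
      push_neg at h
      exact hnq (Finset.mem_biUnion.mpr ⟨q.1 + q.2, Finset.mem_range.mpr (by omega),
        Finset.HasAntidiagonal.mem_antidiagonal.mpr rfl⟩)
  · intro i _ j _ hij
    refine Finset.disjoint_left.mpr fun q hq hq' => hij ?_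
    rw [Finset.HasAntidiagonal.mem_antidiagonal] at hq hq'
    omega

theorem coeff_pow_eq_zero {G : PowerSeries F} (hG0 : PowerSeries.constantCoeff G = 0)
    {n m : ℕ} (h : m < n) : PowerSeries.coeff m (G ^ n) = 0 :=
  PowerSeries.X_pow_dvd_iff.mp
    (pow_dvd_pow_of_dvd (PowerSeries.X_dvd_iff.mpr hG0) n) m h

theorem coeff_psComp (P R : PowerSeries F) (n : ℕ) :
    PowerSeries.coeff n (psComp P R)
      = ∑ k ∈ Finset.range (n + 1), PowerSeries.coeff k P * PowerSeries.coeff n (R ^ k) := by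
  rw [psComp, PowerSeries.coeff_mk]

theorem psComp_one (R : PowerSeries F) : psComp (1 : PowerSeries F) R = 1 := by
  ext n
  rw [coeff_psComp]
  calc ∑ k ∈ Finset.range (n + 1), PowerSeries.coeff k 1 * PowerSeries.coeff n (R ^ k)
      = ∑ k ∈ Finset.range (n + 1),
          (if k = 0 then PowerSeries.coeff n (R ^ k) else 0) := by
        refine Finset.sum_congr rfl fun k _ => ?_
        rw [PowerSeries.coeff_one]
        split <;> simp
    _ = PowerSeries.coeff n (R ^ 0) := by
        rw [Finset.sum_ite_eq' (Finset.range (n + 1)) 0, if_pos (Finset.mem_range.mpr (by omega))]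
    _ = PowerSeries.coeff n 1 := by rw [pow_zero]

theorem psComp_mul (P Q R : PowerSeries F) (hR : PowerSeries.constantCoeff R = 0) :
    psComp (P * Q) R = psComp P R * psComp Q R := by
  ext n
  rw [PowerSeries.coeff_mul, coeff_psComp]
  calc ∑ k ∈ Finset.range (n + 1), PowerSeries.coeff k (P * Q) * PowerSeries.coeff n (R ^ k)
      = ∑ k ∈ Finset.range (n + 1), ∑ q ∈ Finset.HasAntidiagonal.antidiagonal k,
          PowerSeries.coeff q.1 P * PowerSeries.coeff q.2 Q
            * PowerSeries.coeff n (R ^ (q.1 + q.2)) := by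
        refine Finset.sum_congr rfl fun k _ => ?_
        rw [PowerSeries.coeff_mul, Finset.sum_mul]
        exact Finset.sum_congr rfl fun q hq => by rw [Finset.HasAntidiagonal.mem_antidiagonal.mp hq]
    _ = ∑ q ∈ Finset.range (n + 1) ×ˢ Finset.range (n + 1),
          PowerSeries.coeff q.1 P * PowerSeries.coeff q.2 Q
            * PowerSeries.coeff n (R ^ (q.1 + q.2)) :=
        sum_range_antidiagonal n _ (fun q hq => by rw [coeff_pow_eq_zero hR hq, mul_zero])
    _ = ∑ q ∈ Finset.range (n + 1) ×ˢ Finset.range (n + 1), ∑ st ∈ Finset.HasAntidiagonal.antidiagonal n,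
          (PowerSeries.coeff q.1 P * PowerSeries.coeff st.1 (R ^ q.1))
            * (PowerSeries.coeff q.2 Q * PowerSeries.coeff st.2 (R ^ q.2)) := by
        refine Finset.sum_congr rfl fun q _ => ?_
        rw [pow_add, PowerSeries.coeff_mul, Finset.mul_sum]
        exact Finset.sum_congr rfl fun st _ => by ring
    _ = ∑ st ∈ Finset.HasAntidiagonal.antidiagonal n, ∑ q ∈ Finset.range (n + 1) ×ˢ Finset.range (n + 1),
          (PowerSeries.coeff q.1 P * PowerSeries.coeff st.1 (R ^ q.1))
            * (PowerSeries.coeff q.2 Q * PowerSeries.coeff st.2 (R ^ q.2)) :=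
        Finset.sum_comm
    _ = ∑ st ∈ Finset.HasAntidiagonal.antidiagonal n,
          PowerSeries.coeff st.1 (psComp P R) * PowerSeries.coeff st.2 (psComp Q R) := by
        refine Finset.sum_congr rfl fun st hst => ?_
        rw [Finset.HasAntidiagonal.mem_antidiagonal] at hst
        rw [Finset.sum_product, coeff_psComp, coeff_psComp]
        have h1 : ∑ i ∈ Finset.range (st.1 + 1),
            PowerSeries.coeff i P * PowerSeries.coeff st.1 (R ^ i)
            = ∑ i ∈ Finset.range (n + 1),
              PowerSeries.coeff i P * PowerSeries.coeff st.1 (R ^ i) :=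
          Finset.sum_subset (Finset.range_subset_range.mpr (by omega)) fun i _ hni => by
            rw [coeff_pow_eq_zero hR (by simp only [Finset.mem_range, not_lt] at hni ⊢; omega),
              mul_zero]
        have h2 : ∑ j ∈ Finset.range (st.2 + 1),
            PowerSeries.coeff j Q * PowerSeries.coeff st.2 (R ^ j)
            = ∑ j ∈ Finset.range (n + 1),
              PowerSeries.coeff j Q * PowerSeries.coeff st.2 (R ^ j) :=
          Finset.sum_subset (Finset.range_subset_range.mpr (by omega)) fun j _ hnj => by
            rw [coeff_pow_eq_zero hR (by simp only [Finset.mem_range, not_lt] at hnj ⊢; omega),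
              mul_zero]
        rw [h1, h2, Finset.sum_mul_sum]

theorem psComp_pow (P R : PowerSeries F) (hR : PowerSeries.constantCoeff R = 0) :
    ∀ n : ℕ, psComp (P ^ n) R = (psComp P R) ^ n
  | 0 => by rw [pow_zero, pow_zero, psComp_one]
  | n + 1 => by
      rw [pow_succ, psComp_mul _ _ _ hR, psComp_pow P R hR n, pow_succ]

end PS
section CharPPart

variable {F : Type*} [Field F]

theorem chooseId {p : ℕ} (hp : p.Prime) (hchar : CharP F p) (a b q : ℕ)
    (hq : ∃ e : ℕ, q = p ^ e) (hqle : q ≤ a + b) :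
    (((a + b).choose a : ℕ) : F)
      = (((a + b - q).choose a : ℕ) : F)
        + (if q ≤ a then (((a + b - q).choose (a - q) : ℕ) : F) else 0) := by
  haveI := hchar
  obtain ⟨e, he⟩ := hq
  have hq1 : 1 ≤ q := by rw [he]; exact Nat.one_le_pow _ _ hp.pos
  set m := a + b - q with hm
  have hab : a + b = m + q := by omega
  rw [hab, Nat.add_choose_eq, Nat.cast_sum, Finset.Nat.sum_antidiagonal_eq_sum_range_succ_mk]
  have step : ∀ k ∈ Finset.range (a + 1),
      ((m.choose k * q.choose (a - k) : ℕ) : F)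
        = (if k = a then ((m.choose a : ℕ) : F) else 0)
          + (if q ≤ a ∧ k = a - q then ((m.choose (a - q) : ℕ) : F) else 0) := by
    intro k hk
    rw [Finset.mem_range] at hk
    have hk' : k ≤ a := by omega
    push_cast
    by_cases h1 : k = a
    · subst h1
      rw [if_pos rfl, if_neg (by rintro ⟨hqa, haa⟩; omega)]
      simp
    · rw [if_neg h1]
      by_cases h2 : a - k = q
      · have hqa : q ≤ a := by omega
        have hk2 : k = a - q := by omega
        subst hk2
        rw [if_pos ⟨hqa, rfl⟩, h2, Nat.choose_self, Nat.cast_one, mul_one, zero_add]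
      · rw [if_neg (by rintro ⟨hqa, hk2⟩; omega)]
        have hdvd : p ∣ q.choose (a - k) := by
          rw [he]
          exact Nat.Prime.dvd_choose_pow hp (by omega) (by rw [← he]; exact h2)
        rw [(CharP.cast_eq_zero_iff F p _).mpr hdvd, mul_zero, add_zero]
  rw [Finset.sum_congr rfl step, Finset.sum_add_distrib]
  congr 1
  · rw [Finset.sum_ite_eq' (Finset.range (a + 1)) a, if_pos (Finset.mem_range.mpr (by omega))]
  · by_cases hqa : q ≤ a
    · rw [if_pos hqa]
      simp only [hqa, true_and]
      rw [Finset.sum_ite_eq' (Finset.range (a + 1)) (a - q),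
        if_pos (Finset.mem_range.mpr (by omega))]
    · simp [hqa]

theorem star_identity {p : ℕ} (hp : p.Prime) (hchar : CharP F p) {G : PowerSeries F}
    (hG0 : PowerSeries.constantCoeff G = 0)
    (hGsupp : ∀ k : ℕ, (¬ ∃ e : ℕ, k = p ^ e) → PowerSeries.coeff k G = 0) :
    ∀ n a b : ℕ,
      (((a + b).choose a : ℕ) : F) * PowerSeries.coeff (a + b) (G ^ n)
        = ∑ k ∈ Finset.range (n + 1),
            ((n.choose k : ℕ) : F) * PowerSeries.coeff a (G ^ k)
              * PowerSeries.coeff b (G ^ (n - k)) := by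
  intro n
  induction n with
  | zero =>
      intro a b
      by_cases ha : a = 0 <;> by_cases hb : b = 0 <;>
        simp [ha, hb, PowerSeries.coeff_one]
  | succ n ih =>
      intro a b
      have hrec : ∀ m k : ℕ, PowerSeries.coeff m (G ^ (k + 1))
          = ∑ ij ∈ Finset.HasAntidiagonal.antidiagonal m,
              PowerSeries.coeff ij.1 (G ^ k) * PowerSeries.coeff ij.2 G := fun m k => by
        rw [pow_succ, PowerSeries.coeff_mul]
      have pascal :
          ∑ k ∈ Finset.range (n + 2), (((n + 1).choose k : ℕ) : F)
              * PowerSeries.coeff a (G ^ k) * PowerSeries.coeff b (G ^ (n + 1 - k))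
            = (∑ k ∈ Finset.range (n + 1), ((n.choose k : ℕ) : F)
                * PowerSeries.coeff a (G ^ k) * PowerSeries.coeff b (G ^ (n + 1 - k)))
              + ∑ k ∈ Finset.range (n + 1), ((n.choose k : ℕ) : F)
                * PowerSeries.coeff a (G ^ (k + 1)) * PowerSeries.coeff b (G ^ (n - k)) := by
        have hsplit : ∀ k, (((n + 1).choose k : ℕ) : F)
            * PowerSeries.coeff a (G ^ k) * PowerSeries.coeff b (G ^ (n + 1 - k))
            = ((n.choose k : ℕ) : F)
                * PowerSeries.coeff a (G ^ k) * PowerSeries.coeff b (G ^ (n + 1 - k))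
              + (if k = 0 then 0 else ((n.choose (k - 1) : ℕ) : F)
                * PowerSeries.coeff a (G ^ k) * PowerSeries.coeff b (G ^ (n + 1 - k))) := by
          intro k
          cases k with
          | zero => simp
          | succ k =>
              rw [if_neg (Nat.succ_ne_zero k), Nat.choose_succ_succ, Nat.add_sub_cancel]
              push_cast
              ring
        rw [Finset.sum_congr rfl fun k _ => hsplit k, Finset.sum_add_distrib]
        congr 1
        · rw [Finset.sum_range_succ, Nat.choose_succ_self, Nat.cast_zero, zero_mul, zero_mul,
            add_zero]
        · rw [Finset.sum_range_succ' _ (n + 1)]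
          simp [Nat.succ_sub_succ_eq_sub]
      have hA : ∑ k ∈ Finset.range (n + 1), ((n.choose k : ℕ) : F)
            * PowerSeries.coeff a (G ^ k) * PowerSeries.coeff b (G ^ (n + 1 - k))
          = ∑ j ∈ Finset.range (b + 1), (((a + (b - j)).choose a : ℕ) : F)
            * PowerSeries.coeff (a + (b - j)) (G ^ n) * PowerSeries.coeff j G := by
        calc ∑ k ∈ Finset.range (n + 1), ((n.choose k : ℕ) : F)
              * PowerSeries.coeff a (G ^ k) * PowerSeries.coeff b (G ^ (n + 1 - k))
            = ∑ k ∈ Finset.range (n + 1), ∑ ij ∈ Finset.HasAntidiagonal.antidiagonal b,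
                ((n.choose k : ℕ) : F) * PowerSeries.coeff a (G ^ k)
                  * (PowerSeries.coeff ij.1 (G ^ (n - k)) * PowerSeries.coeff ij.2 G) := by
              refine Finset.sum_congr rfl fun k hk => ?_
              rw [Finset.mem_range] at hk
              have h1 : n + 1 - k = (n - k) + 1 := by omega
              rw [h1, hrec b (n - k), Finset.mul_sum]
          _ = ∑ ij ∈ Finset.HasAntidiagonal.antidiagonal b, ∑ k ∈ Finset.range (n + 1),
                (((n.choose k : ℕ) : F) * PowerSeries.coeff a (G ^ k)
                  * PowerSeries.coeff ij.1 (G ^ (n - k))) * PowerSeries.coeff ij.2 G := by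
              rw [Finset.sum_comm]
              exact Finset.sum_congr rfl fun ij _ => Finset.sum_congr rfl fun k _ => by ring
          _ = ∑ ij ∈ Finset.HasAntidiagonal.antidiagonal b, (((a + ij.1).choose a : ℕ) : F)
                * PowerSeries.coeff (a + ij.1) (G ^ n) * PowerSeries.coeff ij.2 G := by
              refine Finset.sum_congr rfl fun ij _ => ?_
              rw [← Finset.sum_mul, ← ih a ij.1]
          _ = ∑ k ∈ Finset.range (b + 1), (((a + k).choose a : ℕ) : F)
                * PowerSeries.coeff (a + k) (G ^ n) * PowerSeries.coeff (b - k) G :=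
              Finset.Nat.sum_antidiagonal_eq_sum_range_succ_mk _ b
          _ = ∑ j ∈ Finset.range (b + 1), (((a + (b - j)).choose a : ℕ) : F)
                * PowerSeries.coeff (a + (b - j)) (G ^ n) * PowerSeries.coeff j G := by
              rw [← Finset.sum_range_reflect]
              refine Finset.sum_congr rfl fun j hj => ?_
              rw [Finset.mem_range] at hj
              have e1 : b + 1 - 1 - j = b - j := by omega
              have e2 : b - (b - j) = j := by omega
              rw [e1, e2]
      have hB : ∑ k ∈ Finset.range (n + 1), ((n.choose k : ℕ) : F)
            * PowerSeries.coeff a (G ^ (k + 1)) * PowerSeries.coeff b (G ^ (n - k))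
          = ∑ j ∈ Finset.range (a + 1), ((((a - j) + b).choose (a - j) : ℕ) : F)
            * PowerSeries.coeff ((a - j) + b) (G ^ n) * PowerSeries.coeff j G := by
        calc ∑ k ∈ Finset.range (n + 1), ((n.choose k : ℕ) : F)
              * PowerSeries.coeff a (G ^ (k + 1)) * PowerSeries.coeff b (G ^ (n - k))
            = ∑ k ∈ Finset.range (n + 1), ∑ ij ∈ Finset.HasAntidiagonal.antidiagonal a,
                ((n.choose k : ℕ) : F)
                  * (PowerSeries.coeff ij.1 (G ^ k) * PowerSeries.coeff ij.2 G)
                  * PowerSeries.coeff b (G ^ (n - k)) := by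
              refine Finset.sum_congr rfl fun k _ => ?_
              rw [hrec a k, Finset.mul_sum, Finset.sum_mul]
          _ = ∑ ij ∈ Finset.HasAntidiagonal.antidiagonal a, ∑ k ∈ Finset.range (n + 1),
                (((n.choose k : ℕ) : F) * PowerSeries.coeff ij.1 (G ^ k)
                  * PowerSeries.coeff b (G ^ (n - k))) * PowerSeries.coeff ij.2 G := by
              rw [Finset.sum_comm]
              exact Finset.sum_congr rfl fun ij _ => Finset.sum_congr rfl fun k _ => by ring
          _ = ∑ ij ∈ Finset.HasAntidiagonal.antidiagonal a, (((ij.1 + b).choose ij.1 : ℕ) : F)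
                * PowerSeries.coeff (ij.1 + b) (G ^ n) * PowerSeries.coeff ij.2 G := by
              refine Finset.sum_congr rfl fun ij _ => ?_
              rw [← Finset.sum_mul, ← ih ij.1 b]
          _ = ∑ k ∈ Finset.range (a + 1), (((k + b).choose k : ℕ) : F)
                * PowerSeries.coeff (k + b) (G ^ n) * PowerSeries.coeff (a - k) G :=
              Finset.Nat.sum_antidiagonal_eq_sum_range_succ_mk _ a
          _ = ∑ j ∈ Finset.range (a + 1), ((((a - j) + b).choose (a - j) : ℕ) : F)
                * PowerSeries.coeff ((a - j) + b) (G ^ n) * PowerSeries.coeff j G := by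
              rw [← Finset.sum_range_reflect]
              refine Finset.sum_congr rfl fun j hj => ?_
              rw [Finset.mem_range] at hj
              have e1 : a + 1 - 1 - j = a - j := by omega
              have e2 : a - (a - j) = j := by omega
              rw [e1, e2]
      have hcoeff0 : PowerSeries.coeff 0 G = 0 := by
        rw [PowerSeries.coeff_zero_eq_constantCoeff]; exact hG0
      have main : ∀ j, j ≤ a + b →
          (((a + b).choose a : ℕ) : F)
              * (PowerSeries.coeff (a + b - j) (G ^ n) * PowerSeries.coeff j G)
            = (if j ≤ b then (((a + (b - j)).choose a : ℕ) : F)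
                  * PowerSeries.coeff (a + (b - j)) (G ^ n) else 0) * PowerSeries.coeff j G
              + (if j ≤ a then ((((a - j) + b).choose (a - j) : ℕ) : F)
                  * PowerSeries.coeff ((a - j) + b) (G ^ n) else 0)
                * PowerSeries.coeff j G := by
        intro j hj
        by_cases hj0 : j = 0
        · subst hj0
          simp [hcoeff0]
        by_cases hje : ∃ e : ℕ, j = p ^ e
        · rcases le_or_gt j b with hjb | hjb
          · rw [if_pos hjb]
            have e1 : a + (b - j) = a + b - j := by omega
            rw [e1]
            rcases le_or_gt j a with hja | hja
            · rw [if_pos hja]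
              have e2 : a - j + b = a + b - j := by omega
              rw [e2, chooseId hp hchar a b j hje (by omega), if_pos hja]
              ring
            · rw [if_neg (by omega), chooseId hp hchar a b j hje (by omega),
                if_neg (by omega)]
              ring
          · rw [if_neg (by omega)]
            have hz : ((a + b - j).choose a : ℕ) = 0 := Nat.choose_eq_zero_of_lt (by omega)
            by_cases hja : j ≤ a
            · have e2 : a - j + b = a + b - j := by omega
              rw [if_pos hja, e2, chooseId hp hchar a b j hje (by omega), if_pos hja, hz]
              push_cast
              ring
            · rw [if_neg hja, chooseId hp hchar a b j hje (by omega), if_neg hja, hz]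
              push_cast
              ring
        · have hzz : PowerSeries.coeff j G = 0 := hGsupp j hje
          simp [hzz]
      have hAext : ∑ j ∈ Finset.range (a + b + 1),
            (if j ≤ b then (((a + (b - j)).choose a : ℕ) : F)
              * PowerSeries.coeff (a + (b - j)) (G ^ n) else 0) * PowerSeries.coeff j G
          = ∑ j ∈ Finset.range (b + 1), (((a + (b - j)).choose a : ℕ) : F)
              * PowerSeries.coeff (a + (b - j)) (G ^ n) * PowerSeries.coeff j G := by
        rw [← Finset.sum_subset (Finset.range_subset_range.mpr (by omega : b + 1 ≤ a + b + 1))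
          (fun j _ hnj => by
            rw [if_neg (by simp only [Finset.mem_range, not_lt] at hnj; omega), zero_mul])]
        refine Finset.sum_congr rfl fun j hj => ?_
        rw [Finset.mem_range] at hj
        rw [if_pos (by omega)]
      have hBext : ∑ j ∈ Finset.range (a + b + 1),
            (if j ≤ a then ((((a - j) + b).choose (a - j) : ℕ) : F)
              * PowerSeries.coeff ((a - j) + b) (G ^ n) else 0) * PowerSeries.coeff j G
          = ∑ j ∈ Finset.range (a + 1), ((((a - j) + b).choose (a - j) : ℕ) : F)
              * PowerSeries.coeff ((a - j) + b) (G ^ n) * PowerSeries.coeff j G := by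
        rw [← Finset.sum_subset (Finset.range_subset_range.mpr (by omega : a + 1 ≤ a + b + 1))
          (fun j _ hnj => by
            rw [if_neg (by simp only [Finset.mem_range, not_lt] at hnj; omega), zero_mul])]
        refine Finset.sum_congr rfl fun j hj => ?_
        rw [Finset.mem_range] at hj
        rw [if_pos (by omega)]
      rw [pascal, hA, hB, hrec (a + b) n, Finset.mul_sum,
        Finset.Nat.sum_antidiagonal_eq_sum_range_succ_mk, ← Finset.sum_range_reflect,
        ← hAext, ← hBext, ← Finset.sum_add_distrib]
      refine Finset.sum_congr rfl fun j hj => ?_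
      rw [Finset.mem_range] at hj
      have e0 : a + b + 1 - 1 - j = a + b - j := by omega
      have e00 : a + b - (a + b - j) = j := by omega
      rw [e0, e00]
      exact main j (by omega)

end CharPPart
section Analytic

variable {F : Type*} [NormedField F] [CompleteSpace F] [IsUltrametricDist F]

theorem summable_null {ι : Type*} {f : ι → F} (h : Tendsto f cofinite (nhds 0)) : Summable f :=
  NonarchimedeanAddGroup.summable_of_tendsto_cofinite_zero h

theorem null_finite {a : ℕ → F} (ha : Tendsto a atTop (nhds 0)) {ε : ℝ} (hε : 0 < ε) :
    {k : ℕ | ε ≤ ‖a k‖}.Finite := by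
  obtain ⟨N, hN⟩ := Metric.tendsto_atTop.mp ha ε hε
  apply Set.Finite.subset (Set.finite_Iio N)
  intro k hk
  simp only [Set.mem_setOf_eq] at hk
  by_contra h'
  simp only [Set.mem_Iio, not_lt] at h'
  have := hN k h'
  rw [dist_zero_right] at this
  linarith

theorem null_bdd {a : ℕ → F} (ha : Tendsto a atTop (nhds 0)) :
    ∃ M : ℝ, 0 < M ∧ ∀ k, ‖a k‖ ≤ M := by
  have hb : BddAbove (Set.range fun k => ‖a k‖) := by
    have h2 : Tendsto (fun k => ‖a k‖) atTop (nhds 0) := by simpa using ha.norm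
    exact h2.bddAbove_range
  obtain ⟨M, hM⟩ := hb
  refine ⟨M + 1, ?_, fun k => ?_⟩
  · have h1 := hM (Set.mem_range_self (f := fun k => ‖a k‖) 0)
    have h2 := norm_nonneg (a 0)
    linarith
  · have h1 := hM (Set.mem_range_self (f := fun k => ‖a k‖) k)
    linarith

theorem coeff_pow_norm_le {G : PowerSeries F} (hGle : ∀ k, ‖PowerSeries.coeff k G‖ ≤ 1)
    (n m : ℕ) : ‖PowerSeries.coeff m (G ^ n)‖ ≤ 1 := by
  induction n generalizing m with
  | zero =>
      rw [pow_zero, PowerSeries.coeff_one]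
      split <;> simp
  | succ n ih =>
      rw [pow_succ, PowerSeries.coeff_mul]
      refine IsUltrametricDist.norm_sum_le_of_forall_le_of_nonneg zero_le_one fun q _ => ?_
      rw [norm_mul]
      exact mul_le_one₀ (ih q.1) (norm_nonneg _) (hGle q.2)

theorem summable_of_norm_le_null {a : ℕ → F} (ha : Tendsto a atTop (nhds 0)) {f : ℕ → F}
    (hf : ∀ m, ‖f m‖ ≤ ‖a m‖) : Summable f := by
  apply summable_null
  apply squeeze_zero_norm hf
  rw [Nat.cofinite_eq_atTop]
  simpa using ha.norm

theorem summable_prod_null {a b : ℕ → F}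
    (ha : Tendsto a atTop (nhds 0)) (hb : Tendsto b atTop (nhds 0)) {f : ℕ × ℕ → F}
    (hf : ∀ p : ℕ × ℕ, ‖f p‖ ≤ ‖a p.1‖ * ‖b p.2‖) : Summable f := by
  apply summable_null
  obtain ⟨Ma, hMa0, hMa⟩ := null_bdd ha
  obtain ⟨Mb, hMb0, hMb⟩ := null_bdd hb
  rw [Metric.tendsto_nhds]
  intro ε hε
  rw [Filter.eventually_cofinite]
  apply Set.Finite.subset
    (Set.Finite.prod (null_finite ha (show (0:ℝ) < ε / Mb by positivity))
      (null_finite hb (show (0:ℝ) < ε / Ma by positivity)))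
  intro q hq
  simp only [Set.mem_setOf_eq, not_lt, dist_zero_right] at hq
  have h1 : ε ≤ ‖a q.1‖ * ‖b q.2‖ := le_trans hq (hf q)
  have ha1 := norm_nonneg (a q.1)
  have hb1 := norm_nonneg (b q.2)
  constructor
  · show ε / Mb ≤ ‖a q.1‖
    rw [div_le_iff₀ hMb0]
    nlinarith [hMb q.2]
  · show ε / Ma ≤ ‖b q.2‖
    rw [div_le_iff₀ hMa0]
    nlinarith [hMa q.1]

theorem vnull {G : PowerSeries F} (hG0 : PowerSeries.constantCoeff G = 0)
    (hGle : ∀ k, ‖PowerSeries.coeff k G‖ ≤ 1) {a : ℕ → F}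
    (ha : Tendsto a atTop (nhds 0)) :
    Tendsto (fun k => ∑' m : ℕ, PowerSeries.coeff m (G ^ k) * a m) atTop (nhds 0) := by
  rw [NormedAddCommGroup.tendsto_nhds_zero]
  intro ε hε
  obtain ⟨N, hN⟩ := Metric.tendsto_atTop.mp ha (ε / 2) (by linarith)
  rw [Filter.eventually_atTop]
  refine ⟨N, fun k hk => ?_⟩
  have hb : ‖∑' m : ℕ, PowerSeries.coeff m (G ^ k) * a m‖ ≤ ε / 2 := by
    apply IsUltrametricDist.norm_tsum_le_of_forall_le_of_nonneg (by linarith)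
    intro m
    rcases lt_or_ge m k with hm | hm
    · rw [coeff_pow_eq_zero hG0 hm, zero_mul, norm_zero]
      linarith
    · rw [norm_mul]
      have h1 := coeff_pow_norm_le hGle k m
      have h2 : ‖a m‖ < ε / 2 := by
        have := hN m (le_trans hk hm)
        rwa [dist_zero_right] at this
      calc ‖PowerSeries.coeff m (G ^ k)‖ * ‖a m‖ ≤ 1 * ‖a m‖ :=
            mul_le_mul_of_nonneg_right h1 (norm_nonneg _)
        _ ≤ ε / 2 := by rw [one_mul]; linarith
  linarith

end Analytic
set_option linter.unusedSectionVars false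

section Main

variable {F : Type*} [NormedField F] [CompleteSpace F] [IsUltrametricDist F]

theorem trans_binomial {p : ℕ} (hp : p.Prime) (hchar : CharP F p)
    {G : PowerSeries F} (hG0 : PowerSeries.constantCoeff G = 0)
    (hGsupp : ∀ k : ℕ, (¬ ∃ e : ℕ, k = p ^ e) → PowerSeries.coeff k G = 0)
    (hGle : ∀ k, ‖PowerSeries.coeff k G‖ ≤ 1)
    {a b c : ℕ → F} (ha : Tendsto a atTop (nhds 0)) (hb : Tendsto b atTop (nhds 0))
    (hc : Tendsto c atTop (nhds 0))
    (hab : ∀ n : ℕ, c n = ∑ k ∈ Finset.range (n + 1), (n.choose k : F) * a k * b (n - k))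
    (n : ℕ) :
    (∑' m : ℕ, PowerSeries.coeff m (G ^ n) * c m)
      = ∑ k ∈ Finset.range (n + 1), (n.choose k : F)
          * (∑' m : ℕ, PowerSeries.coeff m (G ^ k) * a m)
          * (∑' m : ℕ, PowerSeries.coeff m (G ^ (n - k)) * b m) := by
  have hsa : ∀ k, Summable fun m => PowerSeries.coeff m (G ^ k) * a m := fun k =>
    summable_of_norm_le_null ha fun m => by
      rw [norm_mul]
      exact mul_le_of_le_one_left (norm_nonneg _) (coeff_pow_norm_le hGle k m)
  have hsb : ∀ k, Summable fun m => PowerSeries.coeff m (G ^ k) * b m := fun k =>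
    summable_of_norm_le_null hb fun m => by
      rw [norm_mul]
      exact mul_le_of_le_one_left (norm_nonneg _) (coeff_pow_norm_le hGle k m)
  set g : ℕ × ℕ → F := fun q =>
    (((q.1 + q.2).choose q.1 : ℕ) : F) * PowerSeries.coeff (q.1 + q.2) (G ^ n)
      * a q.1 * b q.2 with hgdef
  have hg : Summable g := by
    refine summable_prod_null ha hb fun q => ?_
    have h1 : ‖((((q.1 + q.2).choose q.1 : ℕ)) : F)‖ ≤ 1 :=
      IsUltrametricDist.norm_natCast_le_one F _
    have h2 := coeff_pow_norm_le hGle n (q.1 + q.2)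
    rw [hgdef]
    simp only [norm_mul]
    calc ‖((((q.1 + q.2).choose q.1 : ℕ)) : F)‖ * ‖PowerSeries.coeff (q.1 + q.2) (G ^ n)‖
          * ‖a q.1‖ * ‖b q.2‖
        ≤ 1 * 1 * ‖a q.1‖ * ‖b q.2‖ := by
          gcongr <;> assumption
      _ = ‖a q.1‖ * ‖b q.2‖ := by ring
  have hfk : ∀ k, Summable fun q : ℕ × ℕ =>
      (n.choose k : F) * (PowerSeries.coeff q.1 (G ^ k) * a q.1)
        * (PowerSeries.coeff q.2 (G ^ (n - k)) * b q.2) := by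
    intro k
    refine summable_prod_null ha hb fun q => ?_
    have h0 : ‖((n.choose k : ℕ) : F)‖ ≤ 1 := IsUltrametricDist.norm_natCast_le_one F _
    have h1 := coeff_pow_norm_le hGle k q.1
    have h2 := coeff_pow_norm_le hGle (n - k) q.2
    simp only [norm_mul]
    calc ‖((n.choose k : ℕ) : F)‖ * (‖PowerSeries.coeff q.1 (G ^ k)‖ * ‖a q.1‖)
          * (‖PowerSeries.coeff q.2 (G ^ (n - k))‖ * ‖b q.2‖)
        ≤ 1 * (1 * ‖a q.1‖) * (1 * ‖b q.2‖) := by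
          gcongr <;> assumption
      _ = ‖a q.1‖ * ‖b q.2‖ := by ring
  have hR : ∀ k ∈ Finset.range (n + 1),
      (n.choose k : F) * (∑' m : ℕ, PowerSeries.coeff m (G ^ k) * a m)
          * (∑' m : ℕ, PowerSeries.coeff m (G ^ (n - k)) * b m)
        = ∑' q : ℕ × ℕ, (n.choose k : F) * (PowerSeries.coeff q.1 (G ^ k) * a q.1)
            * (PowerSeries.coeff q.2 (G ^ (n - k)) * b q.2) := by
    intro k _
    have hprod : Summable fun q : ℕ × ℕ =>
        (PowerSeries.coeff q.1 (G ^ k) * a q.1)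
          * (PowerSeries.coeff q.2 (G ^ (n - k)) * b q.2) := by
      refine summable_prod_null ha hb fun q => ?_
      have h1 := coeff_pow_norm_le hGle k q.1
      have h2 := coeff_pow_norm_le hGle (n - k) q.2
      simp only [norm_mul]
      calc (‖PowerSeries.coeff q.1 (G ^ k)‖ * ‖a q.1‖)
            * (‖PowerSeries.coeff q.2 (G ^ (n - k))‖ * ‖b q.2‖)
          ≤ (1 * ‖a q.1‖) * (1 * ‖b q.2‖) := by gcongr <;> assumption
        _ = ‖a q.1‖ * ‖b q.2‖ := by ring
    rw [mul_assoc, Summable.tsum_mul_tsum (hsa k) (hsb (n - k)) hprod, ← tsum_mul_left]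
    exact tsum_congr fun q => by ring
  rw [Finset.sum_congr rfl hR, ← Summable.tsum_finsetSum fun k _ => hfk k]
  have hq : ∀ q : ℕ × ℕ,
      (∑ k ∈ Finset.range (n + 1), (n.choose k : F)
        * (PowerSeries.coeff q.1 (G ^ k) * a q.1)
        * (PowerSeries.coeff q.2 (G ^ (n - k)) * b q.2)) = g q := by
    intro q
    calc ∑ k ∈ Finset.range (n + 1), (n.choose k : F)
          * (PowerSeries.coeff q.1 (G ^ k) * a q.1)
          * (PowerSeries.coeff q.2 (G ^ (n - k)) * b q.2)
        = (∑ k ∈ Finset.range (n + 1), (n.choose k : F) * PowerSeries.coeff q.1 (G ^ k)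
            * PowerSeries.coeff q.2 (G ^ (n - k))) * (a q.1 * b q.2) := by
          rw [Finset.sum_mul]
          exact Finset.sum_congr rfl fun k _ => by ring
      _ = (((q.1 + q.2).choose q.1 : ℕ) : F) * PowerSeries.coeff (q.1 + q.2) (G ^ n)
            * (a q.1 * b q.2) := by
          rw [← star_identity hp hchar hG0 hGsupp n q.1 q.2]
      _ = g q := by rw [hgdef]; ring
  rw [tsum_congr hq]
  have hL : ∀ m : ℕ, PowerSeries.coeff m (G ^ n) * c m
      = ∑ ij ∈ Finset.HasAntidiagonal.antidiagonal m, g ij := by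
    intro m
    rw [hab m, ← Finset.Nat.sum_antidiagonal_eq_sum_range_succ_mk
      (fun ij => (m.choose ij.1 : F) * a ij.1 * b ij.2), Finset.mul_sum]
    refine Finset.sum_congr rfl fun ij hij => ?_
    have h1 := Finset.HasAntidiagonal.mem_antidiagonal.mp hij
    rw [hgdef]
    simp only
    rw [h1]
    ring
  rw [tsum_congr hL]
  have hsig : Summable fun x : (Σ m : ℕ, (Finset.HasAntidiagonal.antidiagonal m : Finset (ℕ × ℕ))) => g x.2 :=
    (Equiv.summable_iff Finset.HasAntidiagonal.sigmaAntidiagonalEquivProd).mpr hg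
  calc ∑' m : ℕ, ∑ ij ∈ Finset.HasAntidiagonal.antidiagonal m, g ij
      = ∑' (m : ℕ), ∑' (ij : (Finset.HasAntidiagonal.antidiagonal m : Finset (ℕ × ℕ))), g ij :=
        tsum_congr fun m => (Finset.tsum_subtype _ g).symm
    _ = ∑' x : (Σ m : ℕ, (Finset.HasAntidiagonal.antidiagonal m : Finset (ℕ × ℕ))), g x.2 :=
        (Summable.tsum_sigma' (fun m => (hasSum_fintype _).summable) hsig).symm
    _ = ∑' q : ℕ × ℕ, g q := Equiv.tsum_eq Finset.HasAntidiagonal.sigmaAntidiagonalEquivProd g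

set_option maxHeartbeats 1000000 in
theorem inv_transform {H Hinv : PowerSeries F}
    (hH0 : PowerSeries.constantCoeff H = 0) (hHle : ∀ k, ‖PowerSeries.coeff k H‖ ≤ 1)
    (hHinv0 : PowerSeries.constantCoeff Hinv = 0)
    (hHinvle : ∀ k, ‖PowerSeries.coeff k Hinv‖ ≤ 1)
    (hinv₂ : psComp H Hinv = PowerSeries.X)
    {a : ℕ → F} (ha : Tendsto a atTop (nhds 0)) (n : ℕ) :
    (∑' k : ℕ, PowerSeries.coeff k (H ^ n)
        * (∑' m : ℕ, PowerSeries.coeff m (Hinv ^ k) * a m)) = a n := by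
  have hdelta : ∀ m : ℕ, ∑ k ∈ Finset.range (m + 1),
      PowerSeries.coeff k (H ^ n) * PowerSeries.coeff m (Hinv ^ k)
        = if m = n then 1 else 0 := by
    intro m
    have h1 : psComp (H ^ n) Hinv = PowerSeries.X ^ n := by
      rw [psComp_pow H Hinv hHinv0 n, hinv₂]
    have h2 := congrArg (PowerSeries.coeff m) h1
    rwa [coeff_psComp, PowerSeries.coeff_X_pow] at h2
  set f : ℕ × ℕ → F := fun q =>
    PowerSeries.coeff q.1 (H ^ n) * (PowerSeries.coeff q.2 (Hinv ^ q.1) * a q.2) with hf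
  have hker : ∀ q : ℕ × ℕ, q.2 < q.1 → f q = 0 := fun q hq => by
    rw [hf]
    simp only
    rw [coeff_pow_eq_zero hHinv0 hq, zero_mul, mul_zero]
  have hbnd : ∀ q : ℕ × ℕ, ‖f q‖ ≤ ‖a q.2‖ := by
    intro q
    rw [hf]
    simp only [norm_mul]
    calc ‖PowerSeries.coeff q.1 (H ^ n)‖
          * (‖PowerSeries.coeff q.2 (Hinv ^ q.1)‖ * ‖a q.2‖)
        ≤ 1 * (1 * ‖a q.2‖) := by
          have h1 := coeff_pow_norm_le hHle n q.1
          have h2 := coeff_pow_norm_le hHinvle q.1 q.2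
          gcongr <;> assumption
      _ = ‖a q.2‖ := by ring
  have hsum : Summable f := by
    apply summable_null
    rw [Metric.tendsto_nhds]
    intro ε hε
    rw [Filter.eventually_cofinite]
    obtain ⟨N, hN⟩ := Metric.tendsto_atTop.mp ha ε hε
    apply Set.Finite.subset (Set.Finite.prod (Set.finite_Iic N) (Set.finite_Iic N))
    intro q hq
    simp only [Set.mem_setOf_eq, not_lt, dist_zero_right] at hq
    have h2 : q.1 ≤ q.2 := by
      by_contra h
      rw [hker q (by omega), norm_zero] at hq
      linarith
    have h3 : q.2 ≤ N := by
      by_contra h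
      have h4 := hN q.2 (by omega)
      rw [dist_zero_right] at h4
      have := hbnd q
      linarith
    exact ⟨le_trans h2 h3, h3⟩
  have hfib : ∀ k, Summable fun m => f (k, m) := by
    intro k
    show Summable fun m => PowerSeries.coeff k (H ^ n)
      * (PowerSeries.coeff m (Hinv ^ k) * a m)
    exact Summable.mul_left _ (summable_of_norm_le_null ha fun m => by
      rw [norm_mul]
      exact mul_le_of_le_one_left (norm_nonneg _) (coeff_pow_norm_le hHinvle k m))
  have hswap : Summable fun q : ℕ × ℕ => f (q.2, q.1) :=
    (Equiv.summable_iff (Equiv.prodComm ℕ ℕ)).mpr hsum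
  calc ∑' k : ℕ, PowerSeries.coeff k (H ^ n)
        * (∑' m : ℕ, PowerSeries.coeff m (Hinv ^ k) * a m)
      = ∑' (k : ℕ) (m : ℕ), f (k, m) := by
        refine tsum_congr fun k => ?_
        show _ = ∑' m : ℕ, PowerSeries.coeff k (H ^ n)
          * (PowerSeries.coeff m (Hinv ^ k) * a m)
        exact tsum_mul_left.symm
    _ = ∑' q : ℕ × ℕ, f q := (Summable.tsum_prod' hsum hfib).symm
    _ = ∑' q : ℕ × ℕ, f (q.2, q.1) := ((Equiv.prodComm ℕ ℕ).tsum_eq f).symm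
    _ = ∑' (m : ℕ) (k : ℕ), f (k, m) :=
        Summable.tsum_prod' hswap fun m => summable_of_ne_finset_zero (s := Finset.range (m + 1))
          fun k hk => hker (k, m) (by simp only [Finset.mem_range, not_lt] at hk; omega)
    _ = ∑' m : ℕ, (if m = n then 1 else 0) * a m := by
        refine tsum_congr fun m => ?_
        rw [tsum_eq_sum (s := Finset.range (m + 1))
          (fun k hk => hker (k, m) (by simp only [Finset.mem_range, not_lt] at hk; omega)),
          ← hdelta m, Finset.sum_mul]
        exact Finset.sum_congr rfl fun k _ => (mul_assoc _ _ _).symm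
    _ = a n := by
        rw [tsum_eq_single n fun m hm => by rw [if_neg hm, zero_mul]]
        rw [if_pos rfl, one_mul]

end Main

/-- Duality preserves the binomial theorem: the family `u` satisfies the
binomial theorem with respect to `S` if and only if its dual family
`v_z(k) = ∑_m coeff_m(Hinv^k)·u_z(m)` does. -/
theorem dual_binomial_iff {F : Type*} [NormedField F] [CompleteSpace F]
    (hna : ∀ x y : F, ‖x + y‖ ≤ max ‖x‖ ‖y‖)
    (p : ℕ) (hp : p.Prime) (hchar : CharP F p)
    (H Hinv : PowerSeries F) (hH : IsAddGen p H) (hHinv : IsAddGen p Hinv)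
    (hinv₁ : psComp Hinv H = PowerSeries.X) (hinv₂ : psComp H Hinv = PowerSeries.X)
    (S : Set F) (u : F → ℕ → F) (hu0 : ∀ z : F, u z 0 = 1)
    (huS : ∀ z ∈ S, Tendsto (u z) atTop (nhds 0))
    (huS' : ∀ x ∈ S, ∀ y ∈ S, Tendsto (u (x + y)) atTop (nhds 0)) :
    (∀ x ∈ S, ∀ y ∈ S, ∀ n : ℕ,
        u (x + y) n = ∑ k ∈ Finset.range (n + 1), (n.choose k : F) * u x k * u y (n - k)) ↔
      (∀ x ∈ S, ∀ y ∈ S, ∀ n : ℕ,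
        (∑' m : ℕ, PowerSeries.coeff m (Hinv ^ n) * u (x + y) m) =
          ∑ k ∈ Finset.range (n + 1), (n.choose k : F) *
            (∑' m : ℕ, PowerSeries.coeff m (Hinv ^ k) * u x m) *
            (∑' m : ℕ, PowerSeries.coeff m (Hinv ^ (n - k)) * u y m)) := by
  haveI : IsUltrametricDist F :=
    IsUltrametricDist.isUltrametricDist_of_isNonarchimedean_norm hna
  obtain ⟨hH0, hHsupp, hHle, hH1⟩ := hH
  obtain ⟨hHinv0, hHinvsupp, hHinvle, hHinv1⟩ := hHinv
  constructor
  · intro hu x hx y hy n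
    exact trans_binomial hp hchar hHinv0 hHinvsupp hHinvle (huS x hx) (huS y hy)
      (huS' x hx y hy) (hu x hx y hy) n
  · intro hv x hx y hy n
    have hux := huS x hx
    have huy := huS y hy
    have huxy := huS' x hx y hy
    have h1 := trans_binomial hp hchar hH0 hHsupp hHle (vnull hHinv0 hHinvle hux)
      (vnull hHinv0 hHinvle huy) (vnull hHinv0 hHinvle huxy) (hv x hx y hy) n
    rw [inv_transform hH0 hHle hHinv0 hHinvle hinv₂ huxy n] at h1
    refine h1.trans (Finset.sum_congr rfl fun k _ => ?_)
    rw [inv_transform hH0 hHle hHinv0 hHinvle hinv₂ hux k,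
      inv_transform hH0 hHle hHinv0 hHinvle hinv₂ huy (n - k)]
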